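/- Let X maximize the weighted welfare ∑_i λ_i u_i(·) over fractional allocations for a strictly positive λ, and let Z be any allocation (fractional or discrete) obtained from X by reallocating each object o only among agents i with x_{io} > 0 (i.e., z_{io} > 0 implies x_{io} > 0). Then Z also maximizes ∑_i λ_i u_i(·), and hence Z is fractionally Pareto-optimal. -/

import Mathlib

/-- `X` is a fractional allocation: nonnegative entries, each object fully allocated. -/
def IsAlloc (n m : ℕ) (X : Fin n → Fin m → ℝ) : Prop :=
  (∀ i o, 0 ≤ X i o) ∧ ∀ o, ∑ i, X i o = 1

/-- Agent `i`'s additive utility under allocation `X` with utility matrix `U`. -/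
def util {n m : ℕ} (U X : Fin n → Fin m → ℝ) (i : Fin n) : ℝ :=
  ∑ o, U i o * X i o

/-- `X` is fractionally Pareto-optimal: no allocation weakly dominates it with one strict gain. -/
def IsFPO (n m : ℕ) (U X : Fin n → Fin m → ℝ) : Prop :=
  ¬ ∃ Y, IsAlloc n m Y ∧ (∀ i, util U X i ≤ util U Y i) ∧ ∃ i, util U X i < util U Y i

/-- The consumption graph of allocation `X`: bipartite on agents ⊕ objects,
with an edge between agent `i` and object `o` iff `X i o > 0`. -/
def consGraph {n m : ℕ} (X : Fin n → Fin m → ℝ) : SimpleGraph (Fin n ⊕ Fin m) where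
  Adj v w :=
    (∃ i o, v = Sum.inl i ∧ w = Sum.inr o ∧ 0 < X i o) ∨
    (∃ i o, v = Sum.inr o ∧ w = Sum.inl i ∧ 0 < X i o)
  symm := by
    refine ⟨?_⟩
    rintro v w (⟨i, o, rfl, rfl, h⟩ | ⟨i, o, rfl, rfl, h⟩)
    · exact Or.inr ⟨i, o, rfl, rfl, h⟩
    · exact Or.inl ⟨i, o, rfl, rfl, h⟩
  loopless := by
    refine ⟨?_⟩
    rintro v (⟨i, o, rfl, h, _⟩ | ⟨i, o, rfl, h, _⟩) <;> simp_all

/-- Reallocating each object only among its fractional holders preserves maximality of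
weighted welfare, hence preserves fPO. -/
theorem realloc_within_support_preserves_fPO (n m : ℕ) (U X Z : Fin n → Fin m → ℝ)
    (lam : Fin n → ℝ) (hlam : ∀ i, 0 < lam i)
    (hX : IsAlloc n m X)
    (hmax : ∀ Y, IsAlloc n m Y → ∑ i, lam i * util U Y i ≤ ∑ i, lam i * util U X i)
    (hZ : IsAlloc n m Z)
    (hsupp : ∀ i o, 0 < Z i o → 0 < X i o) :
    (∀ Y, IsAlloc n m Y → ∑ i, lam i * util U Y i ≤ ∑ i, lam i * util U Z i) ∧
      IsFPO n m U Z := by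
  obtain ⟨hXnn, hXsum⟩ := hX
  obtain ⟨hZnn, hZsum⟩ := hZ
  -- Key: if X i o > 0 then lam i * U i o is maximal in column o.
  have key : ∀ (o : Fin m) (i j : Fin n), 0 < X i o → lam j * U j o ≤ lam i * U i o := by
    intro o i j hio
    by_cases hij : i = j
    · subst hij; exact le_refl _
    set Y : Fin n → Fin m → ℝ := fun k p =>
      X k p + (if k = i ∧ p = o then -X i o else 0) + (if k = j ∧ p = o then X i o else 0)
      with hYdef
    have hYalloc : IsAlloc n m Y := by
      refine ⟨fun k p => ?_, fun p => ?_⟩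
      · simp only [hYdef]
        by_cases h1 : k = i ∧ p = o
        · obtain ⟨rfl, rfl⟩ := h1
          simp [hij]
        · by_cases h2 : k = j ∧ p = o
          · obtain ⟨rfl, rfl⟩ := h2
            have hki : ¬ k = i := fun h => hij h.symm
            simp [hki]
            try linarith [hXnn k p, hXnn i p]
          · simp [h1, h2]
            try exact hXnn k p
      · simp only [hYdef]
        rw [Finset.sum_add_distrib, Finset.sum_add_distrib]
        by_cases hp : p = o
        · subst hp
          simp only [and_true]
          rw [Finset.sum_ite_eq' Finset.univ i, Finset.sum_ite_eq' Finset.univ j]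
          simp [hXsum p]
        · simp [hp, hXsum p]
    have hutil : ∀ k, util U Y k = util U X k
        + (if k = i then -(U i o * X i o) else 0) + (if k = j then U j o * X i o else 0) := by
      intro k
      simp only [util, hYdef]
      have hpt : ∀ p, U k p * (X k p + (if k = i ∧ p = o then -X i o else 0)
          + (if k = j ∧ p = o then X i o else 0))
          = U k p * X k p + (if k = i ∧ p = o then -(U i o * X i o) else 0)
          + (if k = j ∧ p = o then U j o * X i o else 0) := by
        intro p
        by_cases h1 : k = i ∧ p = o
        · obtain ⟨rfl, rfl⟩ := h1
          simp [hij]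
          try ring
        · by_cases h2 : k = j ∧ p = o
          · obtain ⟨rfl, rfl⟩ := h2
            have hki : ¬ k = i := fun h => hij h.symm
            simp [hki]
            try ring
          · simp [h1, h2]
            try ring
      rw [Finset.sum_congr rfl (fun p _ => hpt p), Finset.sum_add_distrib,
        Finset.sum_add_distrib]
      congr 1
      · congr 1
        by_cases hk : k = i
        · subst hk
          simp [Finset.sum_ite_eq' Finset.univ o]
        · simp [hk]
      · by_cases hk : k = j
        · subst hk
          simp [Finset.sum_ite_eq' Finset.univ o]
        · simp [hk]
    have hw := hmax Y hYalloc
    have hexp : ∑ k, lam k * util U Y k = ∑ k, lam k * util U X k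
        - lam i * (U i o * X i o) + lam j * (U j o * X i o) := by
      rw [Finset.sum_congr rfl (fun k _ => by rw [hutil k])]
      have hpt : ∀ k, lam k * (util U X k + (if k = i then -(U i o * X i o) else 0)
          + (if k = j then U j o * X i o else 0))
          = lam k * util U X k + (if k = i then -(lam i * (U i o * X i o)) else 0)
          + (if k = j then lam j * (U j o * X i o) else 0) := by
        intro k
        by_cases h1 : k = i
        · subst h1
          simp [hij]
          try ring
        · by_cases h2 : k = j
          · subst h2
            have hki : ¬ k = i := fun h => hij h.symm
            simp [hki]
            try ring
          · simp [h1, h2]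
            try ring
      rw [Finset.sum_congr rfl (fun k _ => hpt k), Finset.sum_add_distrib,
        Finset.sum_add_distrib, Finset.sum_ite_eq' Finset.univ i,
        Finset.sum_ite_eq' Finset.univ j]
      simp only [Finset.mem_univ, if_true]
      ring
    rw [hexp] at hw
    have h2 : lam j * U j o * X i o ≤ lam i * U i o * X i o := by nlinarith
    exact le_of_mul_le_mul_right h2 hio
  -- columnwise: the weighted value of each column is the same under Z and X
  have col : ∀ o : Fin m, ∑ k, lam k * (U k o * Z k o) = ∑ k, lam k * (U k o * X k o) := by
    intro o
    have hex : ∃ i0, 0 < X i0 o := by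
      by_contra h
      push_neg at h
      have : ∑ k, X k o ≤ 0 := Finset.sum_nonpos (fun k _ => h k)
      rw [hXsum o] at this; linarith
    obtain ⟨i0, hi0⟩ := hex
    have hZc : ∀ k, lam k * (U k o * Z k o) = (lam i0 * U i0 o) * Z k o := by
      intro k
      rcases lt_or_eq_of_le (hZnn k o) with hk | hk
      · have hXk := hsupp k o hk
        have heq : lam k * U k o = lam i0 * U i0 o :=
          le_antisymm (key o i0 k hi0) (key o k i0 hXk)
        rw [← heq]; ring
      · rw [← hk]; ring
    have hXc : ∀ k, lam k * (U k o * X k o) = (lam i0 * U i0 o) * X k o := by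
      intro k
      rcases lt_or_eq_of_le (hXnn k o) with hk | hk
      · have heq : lam k * U k o = lam i0 * U i0 o :=
          le_antisymm (key o i0 k hi0) (key o k i0 hk)
        rw [← heq]; ring
      · rw [← hk]; ring
    rw [Finset.sum_congr rfl (fun k _ => hZc k), Finset.sum_congr rfl (fun k _ => hXc k),
      ← Finset.mul_sum, ← Finset.mul_sum, hZsum o, hXsum o]
  -- total welfare equal
  have hEq : ∑ i, lam i * util U Z i = ∑ i, lam i * util U X i := by
    have h1 : ∑ i, lam i * util U Z i = ∑ o, ∑ k, lam k * (U k o * Z k o) := by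
      simp only [util, Finset.mul_sum]
      exact Finset.sum_comm
    have h2 : ∑ i, lam i * util U X i = ∑ o, ∑ k, lam k * (U k o * X k o) := by
      simp only [util, Finset.mul_sum]
      exact Finset.sum_comm
    rw [h1, h2]
    exact Finset.sum_congr rfl (fun o _ => col o)
  have hmaxZ : ∀ Y, IsAlloc n m Y → ∑ i, lam i * util U Y i ≤ ∑ i, lam i * util U Z i := by
    intro Y hY
    rw [hEq]; exact hmax Y hY
  refine ⟨hmaxZ, ?_⟩
  rintro ⟨Y, hY, hle, i, hi⟩
  have h1 := hmaxZ Y hY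
  have h2 : ∑ k, lam k * util U Z k < ∑ k, lam k * util U Y k := by
    apply Finset.sum_lt_sum
    · exact fun k _ => mul_le_mul_of_nonneg_left (hle k) (hlam k).le
    · exact ⟨i, Finset.mem_univ i, mul_lt_mul_of_pos_left hi (hlam i)⟩
  linarith
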